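/- In the first-kind singular BGG complex, after adding the non-standard arrows d_1⋯d_{k−2} 0 0 1 1 d_{k+3}⋯d_n → d_1⋯d_{k−2} 1 0 1 0 d_{k+3}⋯d_n (for 2 ≤ k ≤ n−2) and d_1⋯d_{n−3} 0 0 1 → d_1⋯d_{n−3} 1 0 1 (for k = n−1) to the standard arrows inherited from W^p, the deletion map removing positions k and k+1 becomes a directed-graph isomorphism from the singular Hasse diagram of rank n (with singular set {α_k}) onto the regular Hasse diagram W^{n−2} of binary words of length n−2, where the arrows in W^{n−2} are: swap consecutive 01 to 10, or change final 0 to 1. -/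

import Mathlib

namespace Stmt11

/-- The standard arrows of the Hasse diagram `W^p` in the LS encoding: swap a consecutive
pair `01` to `10`, or change the last digit from `0` to `1`. -/
def Arrow (n : ℕ) (w w' : Fin n → Bool) : Prop :=
  (∃ i j : Fin n, j.val = i.val + 1 ∧ w i = false ∧ w j = true ∧
      w' i = true ∧ w' j = false ∧ ∀ t : Fin n, t ≠ i → t ≠ j → w' t = w t) ∨
  (∃ i : Fin n, i.val = n - 1 ∧ w i = false ∧ w' i = true ∧
      ∀ t : Fin n, t ≠ i → w' t = w t)

/-- The non-standard arrows of the first-kind singular BGG complex at the 1-indexed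
singular position `k = k0 + 1` (positions of words are 0-indexed): for `k ≤ n - 2`, the
digits at positions `k0 - 1` and `k0 + 2` change from `(0, 1)` to `(1, 0)` (the pattern
`0011 → 1010` around the fixed digits `01` at positions `k0, k0+1`); for `k = n - 1`, the
digit at position `k0 - 1 = n - 3` changes from `0` to `1` (the pattern `001 → 101`). -/
def NonStdArrow (n k0 : ℕ) (w w' : Fin n → Bool) : Prop :=
  (∃ i j : Fin n, i.val = k0 - 1 ∧ j.val = k0 + 2 ∧
      w i = false ∧ w j = true ∧ w' i = true ∧ w' j = false ∧
      ∀ t : Fin n, t ≠ i → t ≠ j → w' t = w t) ∨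
  (k0 + 2 = n ∧ ∃ i : Fin n, i.val = k0 - 1 ∧ w i = false ∧ w' i = true ∧
      ∀ t : Fin n, t ≠ i → w' t = w t)

/-- Deletion of the two digits at positions `k0, k0+1`. -/
def del (n k0 : ℕ) (hk2 : k0 + 2 ≤ n) (w : Fin n → Bool) (t : Fin (n - 2)) : Bool :=
  if h : t.val < k0 then w ⟨t.val, by have := t.isLt; omega⟩ else w ⟨t.val + 2, by omega⟩

lemma del_eq {n k0 : ℕ} (hk2 : k0 + 2 ≤ n) (w : Fin n → Bool) (t : Fin (n - 2)) (b : Fin n)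
    (a c : ℕ) (ht : t.val = a) (hb : b.val = c)
    (h : (a < k0 ∧ c = a) ∨ (k0 ≤ a ∧ c = a + 2)) :
    del n k0 hk2 w t = w b := by
  unfold del
  rcases h with ⟨h1, h2⟩ | ⟨h1, h2⟩
  · rw [dif_pos (show t.val < k0 by omega)]
    exact congrArg w (Fin.ext (show t.val = b.val by omega))
  · rw [dif_neg (show ¬ t.val < k0 by omega)]
    exact congrArg w (Fin.ext (show t.val + 2 = b.val by omega))

/-- Insertion of the digits `0, 1` at positions `k0, k0+1`. -/
def ins (n k0 : ℕ) (hk2 : k0 + 2 ≤ n) (g : Fin (n - 2) → Bool) (t : Fin n) : Bool :=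
  if h : t.val < k0 then g ⟨t.val, by omega⟩
  else if h0 : t.val = k0 then false
  else if h1 : t.val = k0 + 1 then true
  else g ⟨t.val - 2, by have := t.isLt; omega⟩

lemma ins_eq {n k0 : ℕ} (hk2 : k0 + 2 ≤ n) (g : Fin (n - 2) → Bool) (t : Fin n)
    (b : Fin (n - 2)) (a c : ℕ) (ht : t.val = a) (hb : b.val = c)
    (h : (a < k0 ∧ c = a) ∨ (k0 + 2 ≤ a ∧ c = a - 2)) :
    ins n k0 hk2 g t = g b := by
  unfold ins
  rcases h with ⟨h1, h2⟩ | ⟨h1, h2⟩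
  · rw [dif_pos (show t.val < k0 by omega)]
    exact congrArg g (Fin.ext (show t.val = b.val by omega))
  · rw [dif_neg (show ¬ t.val < k0 by omega), dif_neg (show ¬ t.val = k0 by omega),
      dif_neg (show ¬ t.val = k0 + 1 by omega)]
    exact congrArg g (Fin.ext (show t.val - 2 = b.val by omega))

lemma ins_k0 {n k0 : ℕ} (hk2 : k0 + 2 ≤ n) (g : Fin (n - 2) → Bool) (t : Fin n)
    (h : t.val = k0) : ins n k0 hk2 g t = false := by
  unfold ins; rw [dif_neg (by omega), dif_pos h]

lemma ins_k1 {n k0 : ℕ} (hk2 : k0 + 2 ≤ n) (g : Fin (n - 2) → Bool) (t : Fin n)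
    (h : t.val = k0 + 1) : ins n k0 hk2 g t = true := by
  unfold ins; rw [dif_neg (by omega), dif_neg (by omega), dif_pos h]

set_option maxHeartbeats 3200000 in
/-- First-kind singular BGG complex, singular position `k = k0 + 1` with `2 ≤ k ≤ n - 1`:
after adding the non-standard arrows to the standard arrows inherited from `W^p`, the map
deleting the digits at positions `k0, k0 + 1` is an isomorphism of directed graphs from the
singular Hasse diagram of rank `n` onto the regular Hasse diagram `W^{n-2}` of binary words
of length `n - 2` (arrows: swap consecutive `01` to `10`, or change final `0` to `1`). -/
theorem singular_bgg_graph_iso_first_kind (n k0 : ℕ) (hk1 : 1 ≤ k0) (hk2 : k0 + 2 ≤ n) :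
    Function.Bijective
      (fun (w : {w : Fin n → Bool //
          w ⟨k0, by omega⟩ = false ∧ w ⟨k0 + 1, by omega⟩ = true}) =>
        fun t : Fin (n - 2) =>
          if h : t.val < k0 then w.val ⟨t.val, by omega⟩
          else w.val ⟨t.val + 2, by omega⟩) ∧
    ∀ (u v : {w : Fin n → Bool //
        w ⟨k0, by omega⟩ = false ∧ w ⟨k0 + 1, by omega⟩ = true}),
      (Arrow n u.val v.val ∨ NonStdArrow n k0 u.val v.val) ↔
        Arrow (n - 2)
          (fun t : Fin (n - 2) =>
            if h : t.val < k0 then u.val ⟨t.val, by omega⟩ else u.val ⟨t.val + 2, by omega⟩)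
          (fun t : Fin (n - 2) =>
            if h : t.val < k0 then v.val ⟨t.val, by omega⟩
            else v.val ⟨t.val + 2, by omega⟩) := by
  have hk0n : k0 < n := by omega
  have hk1n : k0 + 1 < n := by omega
  show Function.Bijective
      (fun (w : {w : Fin n → Bool // w ⟨k0, hk0n⟩ = false ∧ w ⟨k0 + 1, hk1n⟩ = true}) =>
        del n k0 hk2 w.val) ∧
    ∀ u v : {w : Fin n → Bool // w ⟨k0, hk0n⟩ = false ∧ w ⟨k0 + 1, hk1n⟩ = true},
      (Arrow n u.val v.val ∨ NonStdArrow n k0 u.val v.val) ↔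
        Arrow (n - 2) (del n k0 hk2 u.val) (del n k0 hk2 v.val)
  refine ⟨⟨?_, ?_⟩, ?_⟩
  · -- injective
    intro u v h
    have h' : del n k0 hk2 u.val = del n k0 hk2 v.val := h
    refine Subtype.ext (funext fun t => ?_)
    have htn := t.isLt
    rcases (by omega : t.val < k0 ∨ t.val = k0 ∨ t.val = k0 + 1 ∨ k0 + 2 ≤ t.val)
      with hc | hc | hc | hc
    · have := congrFun h' ⟨t.val, by omega⟩
      rwa [del_eq hk2 u.val _ t t.val t.val rfl rfl (Or.inl ⟨hc, rfl⟩),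
        del_eq hk2 v.val _ t t.val t.val rfl rfl (Or.inl ⟨hc, rfl⟩)] at this
    · rw [show t = (⟨k0, hk0n⟩ : Fin n) from Fin.ext hc, u.2.1, v.2.1]
    · rw [show t = (⟨k0 + 1, hk1n⟩ : Fin n) from Fin.ext hc, u.2.2, v.2.2]
    · have := congrFun h' ⟨t.val - 2, by omega⟩
      rwa [del_eq hk2 u.val _ t (t.val - 2) t.val rfl rfl (Or.inr ⟨by omega, by omega⟩),
        del_eq hk2 v.val _ t (t.val - 2) t.val rfl rfl (Or.inr ⟨by omega, by omega⟩)] at this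
  · -- surjective
    intro g
    refine ⟨⟨ins n k0 hk2 g, ins_k0 hk2 g _ rfl, ins_k1 hk2 g _ rfl⟩, ?_⟩
    funext t
    show del n k0 hk2 (ins n k0 hk2 g) t = g t
    have htn := t.isLt
    by_cases h : t.val < k0
    · rw [del_eq hk2 _ t ⟨t.val, by omega⟩ t.val t.val rfl rfl (Or.inl ⟨h, rfl⟩),
        ins_eq hk2 g _ t t.val t.val rfl rfl (Or.inl ⟨h, rfl⟩)]
    · rw [del_eq hk2 _ t ⟨t.val + 2, by omega⟩ t.val (t.val + 2) rfl rfl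
          (Or.inr ⟨by omega, rfl⟩),
        ins_eq hk2 g _ t (t.val + 2) t.val rfl rfl (Or.inr ⟨by omega, by omega⟩)]
  · -- arrows
    intro u v
    constructor
    · rintro ((⟨i, j, hj, hui, huj, hvi, hvj, hrest⟩ | ⟨i, hi, hui, hvi, hrest⟩) |
        (⟨i, j, hi, hj, hui, huj, hvi, hvj, hrest⟩ | ⟨hn2, i, hi, hui, hvi, hrest⟩))
      · -- standard swap
        have hin := i.isLt; have hjn := j.isLt
        have hik0 : i.val ≠ k0 := by
          intro h
          rw [show i = (⟨k0, hk0n⟩ : Fin n) from Fin.ext h, v.2.1] at hvi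
          simp at hvi
        have hik1 : i.val ≠ k0 + 1 := by
          intro h
          rw [show i = (⟨k0 + 1, hk1n⟩ : Fin n) from Fin.ext h, u.2.2] at hui
          simp at hui
        have hjk0 : j.val ≠ k0 := by
          intro h
          rw [show j = (⟨k0, hk0n⟩ : Fin n) from Fin.ext h, u.2.1] at huj
          simp at huj
        have hjk1 : j.val ≠ k0 + 1 := by
          intro h
          rw [show j = (⟨k0 + 1, hk1n⟩ : Fin n) from Fin.ext h, v.2.2] at hvj
          simp at hvj
        rcases (by omega : j.val < k0 ∨ k0 + 2 ≤ i.val) with hc | hc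
        · refine Or.inl ⟨⟨i.val, by omega⟩, ⟨j.val, by omega⟩, hj, ?_, ?_, ?_, ?_, ?_⟩
          · rw [del_eq hk2 u.val _ i i.val i.val rfl rfl (Or.inl ⟨by omega, rfl⟩)]; exact hui
          · rw [del_eq hk2 u.val _ j j.val j.val rfl rfl (Or.inl ⟨hc, rfl⟩)]; exact huj
          · rw [del_eq hk2 v.val _ i i.val i.val rfl rfl (Or.inl ⟨by omega, rfl⟩)]; exact hvi
          · rw [del_eq hk2 v.val _ j j.val j.val rfl rfl (Or.inl ⟨hc, rfl⟩)]; exact hvj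
          · intro s hs1 hs2
            have hs1' : s.val ≠ i.val := fun hh => hs1 (Fin.ext hh)
            have hs2' : s.val ≠ j.val := fun hh => hs2 (Fin.ext hh)
            have hsn := s.isLt
            by_cases h : s.val < k0
            · rw [del_eq hk2 v.val s ⟨s.val, by omega⟩ s.val s.val rfl rfl
                  (Or.inl ⟨h, rfl⟩),
                del_eq hk2 u.val s ⟨s.val, by omega⟩ s.val s.val rfl rfl (Or.inl ⟨h, rfl⟩)]
              exact hrest _ (Fin.ne_of_val_ne (show s.val ≠ i.val from hs1'))
                (Fin.ne_of_val_ne (show s.val ≠ j.val from hs2'))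
            · rw [del_eq hk2 v.val s ⟨s.val + 2, by omega⟩ s.val (s.val + 2) rfl rfl
                  (Or.inr ⟨by omega, rfl⟩),
                del_eq hk2 u.val s ⟨s.val + 2, by omega⟩ s.val (s.val + 2) rfl rfl
                  (Or.inr ⟨by omega, rfl⟩)]
              exact hrest _ (Fin.ne_of_val_ne (show s.val + 2 ≠ i.val by omega))
                (Fin.ne_of_val_ne (show s.val + 2 ≠ j.val by omega))
        · refine Or.inl ⟨⟨i.val - 2, by omega⟩, ⟨j.val - 2, by omega⟩,
            show j.val - 2 = i.val - 2 + 1 by omega, ?_, ?_, ?_, ?_, ?_⟩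
          · rw [del_eq hk2 u.val _ i (i.val - 2) i.val rfl rfl
              (Or.inr ⟨by omega, by omega⟩)]; exact hui
          · rw [del_eq hk2 u.val _ j (j.val - 2) j.val rfl rfl
              (Or.inr ⟨by omega, by omega⟩)]; exact huj
          · rw [del_eq hk2 v.val _ i (i.val - 2) i.val rfl rfl
              (Or.inr ⟨by omega, by omega⟩)]; exact hvi
          · rw [del_eq hk2 v.val _ j (j.val - 2) j.val rfl rfl
              (Or.inr ⟨by omega, by omega⟩)]; exact hvj
          · intro s hs1 hs2
            have hs1' : s.val ≠ i.val - 2 := fun hh => hs1 (Fin.ext hh)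
            have hs2' : s.val ≠ j.val - 2 := fun hh => hs2 (Fin.ext hh)
            have hsn := s.isLt
            by_cases h : s.val < k0
            · rw [del_eq hk2 v.val s ⟨s.val, by omega⟩ s.val s.val rfl rfl
                  (Or.inl ⟨h, rfl⟩),
                del_eq hk2 u.val s ⟨s.val, by omega⟩ s.val s.val rfl rfl (Or.inl ⟨h, rfl⟩)]
              exact hrest _ (Fin.ne_of_val_ne (show s.val ≠ i.val by omega))
                (Fin.ne_of_val_ne (show s.val ≠ j.val by omega))
            · rw [del_eq hk2 v.val s ⟨s.val + 2, by omega⟩ s.val (s.val + 2) rfl rfl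
                  (Or.inr ⟨by omega, rfl⟩),
                del_eq hk2 u.val s ⟨s.val + 2, by omega⟩ s.val (s.val + 2) rfl rfl
                  (Or.inr ⟨by omega, rfl⟩)]
              exact hrest _ (Fin.ne_of_val_ne (show s.val + 2 ≠ i.val by omega))
                (Fin.ne_of_val_ne (show s.val + 2 ≠ j.val by omega))
      · -- standard final
        have hin := i.isLt
        have hik1 : i.val ≠ k0 + 1 := by
          intro h
          rw [show i = (⟨k0 + 1, hk1n⟩ : Fin n) from Fin.ext h, u.2.2] at hui
          simp at hui
        have hge : k0 + 2 ≤ n - 1 := by omega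
        refine Or.inr ⟨⟨n - 3, by omega⟩, show n - 3 = n - 2 - 1 by omega, ?_, ?_, ?_⟩
        · rw [del_eq hk2 u.val _ i (n - 3) i.val rfl rfl (Or.inr ⟨by omega, by omega⟩)]
          exact hui
        · rw [del_eq hk2 v.val _ i (n - 3) i.val rfl rfl (Or.inr ⟨by omega, by omega⟩)]
          exact hvi
        · intro s hs1
          have hs1' : s.val ≠ n - 3 := fun hh => hs1 (Fin.ext hh)
          have hsn := s.isLt
          by_cases h : s.val < k0
          · rw [del_eq hk2 v.val s ⟨s.val, by omega⟩ s.val s.val rfl rfl (Or.inl ⟨h, rfl⟩),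
              del_eq hk2 u.val s ⟨s.val, by omega⟩ s.val s.val rfl rfl (Or.inl ⟨h, rfl⟩)]
            exact hrest _ (Fin.ne_of_val_ne (show s.val ≠ i.val by omega))
          · rw [del_eq hk2 v.val s ⟨s.val + 2, by omega⟩ s.val (s.val + 2) rfl rfl
                (Or.inr ⟨by omega, rfl⟩),
              del_eq hk2 u.val s ⟨s.val + 2, by omega⟩ s.val (s.val + 2) rfl rfl
                (Or.inr ⟨by omega, rfl⟩)]
            exact hrest _ (Fin.ne_of_val_ne (show s.val + 2 ≠ i.val by omega))
      · -- non-standard, first form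
        have hjn := j.isLt
        have hk0n2 : k0 < n - 2 := by omega
        refine Or.inl ⟨⟨k0 - 1, by omega⟩, ⟨k0, by omega⟩,
          show k0 = k0 - 1 + 1 by omega, ?_, ?_, ?_, ?_, ?_⟩
        · rw [del_eq hk2 u.val _ i (k0 - 1) i.val rfl rfl (Or.inl ⟨by omega, by omega⟩)]
          exact hui
        · rw [del_eq hk2 u.val _ j k0 j.val rfl rfl (Or.inr ⟨by omega, by omega⟩)]
          exact huj
        · rw [del_eq hk2 v.val _ i (k0 - 1) i.val rfl rfl (Or.inl ⟨by omega, by omega⟩)]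
          exact hvi
        · rw [del_eq hk2 v.val _ j k0 j.val rfl rfl (Or.inr ⟨by omega, by omega⟩)]
          exact hvj
        · intro s hs1 hs2
          have hs1' : s.val ≠ k0 - 1 := fun hh => hs1 (Fin.ext hh)
          have hs2' : s.val ≠ k0 := fun hh => hs2 (Fin.ext hh)
          have hsn := s.isLt
          by_cases h : s.val < k0
          · rw [del_eq hk2 v.val s ⟨s.val, by omega⟩ s.val s.val rfl rfl (Or.inl ⟨h, rfl⟩),
              del_eq hk2 u.val s ⟨s.val, by omega⟩ s.val s.val rfl rfl (Or.inl ⟨h, rfl⟩)]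
            exact hrest _ (Fin.ne_of_val_ne (show s.val ≠ i.val by omega))
              (Fin.ne_of_val_ne (show s.val ≠ j.val by omega))
          · rw [del_eq hk2 v.val s ⟨s.val + 2, by omega⟩ s.val (s.val + 2) rfl rfl
                (Or.inr ⟨by omega, rfl⟩),
              del_eq hk2 u.val s ⟨s.val + 2, by omega⟩ s.val (s.val + 2) rfl rfl
                (Or.inr ⟨by omega, rfl⟩)]
            exact hrest _ (Fin.ne_of_val_ne (show s.val + 2 ≠ i.val by omega))
              (Fin.ne_of_val_ne (show s.val + 2 ≠ j.val by omega))
      · -- non-standard, second form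
        refine Or.inr ⟨⟨n - 3, by omega⟩, show n - 3 = n - 2 - 1 by omega, ?_, ?_, ?_⟩
        · rw [del_eq hk2 u.val _ i (n - 3) i.val rfl rfl (Or.inl ⟨by omega, by omega⟩)]
          exact hui
        · rw [del_eq hk2 v.val _ i (n - 3) i.val rfl rfl (Or.inl ⟨by omega, by omega⟩)]
          exact hvi
        · intro s hs1
          have hs1' : s.val ≠ n - 3 := fun hh => hs1 (Fin.ext hh)
          have hsn := s.isLt
          rw [del_eq hk2 v.val s ⟨s.val, by omega⟩ s.val s.val rfl rfl
              (Or.inl ⟨by omega, rfl⟩),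
            del_eq hk2 u.val s ⟨s.val, by omega⟩ s.val s.val rfl rfl
              (Or.inl ⟨by omega, rfl⟩)]
          exact hrest _ (Fin.ne_of_val_ne (show s.val ≠ i.val by omega))
    · rintro (⟨I, J, hJ, h1, h2, h3, h4, hrest⟩ | ⟨I, hI, h1, h2, hrest⟩)
      · -- small swap
        have hIn := I.isLt; have hJn := J.isLt
        rcases (by omega : J.val < k0 ∨ k0 ≤ I.val ∨ (I.val + 1 = k0 ∧ J.val = k0))
          with hc | hc | ⟨hc1, hc2⟩
        · refine Or.inl (Or.inl ⟨⟨I.val, by omega⟩, ⟨J.val, by omega⟩, hJ,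
            ?_, ?_, ?_, ?_, ?_⟩)
          · exact (del_eq hk2 u.val I ⟨I.val, by omega⟩ I.val I.val rfl rfl
              (Or.inl ⟨by omega, rfl⟩)).symm.trans h1
          · exact (del_eq hk2 u.val J ⟨J.val, by omega⟩ J.val J.val rfl rfl
              (Or.inl ⟨hc, rfl⟩)).symm.trans h2
          · exact (del_eq hk2 v.val I ⟨I.val, by omega⟩ I.val I.val rfl rfl
              (Or.inl ⟨by omega, rfl⟩)).symm.trans h3
          · exact (del_eq hk2 v.val J ⟨J.val, by omega⟩ J.val J.val rfl rfl
              (Or.inl ⟨hc, rfl⟩)).symm.trans h4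
          · intro t ht1 ht2
            have ht1' : t.val ≠ I.val := fun hh => ht1 (Fin.ext hh)
            have ht2' : t.val ≠ J.val := fun hh => ht2 (Fin.ext hh)
            have htn := t.isLt
            rcases (by omega : t.val < k0 ∨ t.val = k0 ∨ t.val = k0 + 1 ∨ k0 + 2 ≤ t.val)
              with h | h | h | h
            · have := hrest ⟨t.val, by omega⟩
                (Fin.ne_of_val_ne (show t.val ≠ I.val from ht1'))
                (Fin.ne_of_val_ne (show t.val ≠ J.val from ht2'))
              rwa [del_eq hk2 v.val _ t t.val t.val rfl rfl (Or.inl ⟨h, rfl⟩),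
                del_eq hk2 u.val _ t t.val t.val rfl rfl (Or.inl ⟨h, rfl⟩)] at this
            · rw [show t = (⟨k0, hk0n⟩ : Fin n) from Fin.ext h, v.2.1, u.2.1]
            · rw [show t = (⟨k0 + 1, hk1n⟩ : Fin n) from Fin.ext h, v.2.2, u.2.2]
            · have := hrest ⟨t.val - 2, by omega⟩
                (Fin.ne_of_val_ne (show t.val - 2 ≠ I.val by omega))
                (Fin.ne_of_val_ne (show t.val - 2 ≠ J.val by omega))
              rwa [del_eq hk2 v.val _ t (t.val - 2) t.val rfl rfl
                  (Or.inr ⟨by omega, by omega⟩),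
                del_eq hk2 u.val _ t (t.val - 2) t.val rfl rfl
                  (Or.inr ⟨by omega, by omega⟩)] at this
        · refine Or.inl (Or.inl ⟨⟨I.val + 2, by omega⟩, ⟨J.val + 2, by omega⟩,
            show J.val + 2 = I.val + 2 + 1 by omega, ?_, ?_, ?_, ?_, ?_⟩)
          · exact (del_eq hk2 u.val I ⟨I.val + 2, by omega⟩ I.val (I.val + 2) rfl rfl
              (Or.inr ⟨hc, rfl⟩)).symm.trans h1
          · exact (del_eq hk2 u.val J ⟨J.val + 2, by omega⟩ J.val (J.val + 2) rfl rfl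
              (Or.inr ⟨by omega, rfl⟩)).symm.trans h2
          · exact (del_eq hk2 v.val I ⟨I.val + 2, by omega⟩ I.val (I.val + 2) rfl rfl
              (Or.inr ⟨hc, rfl⟩)).symm.trans h3
          · exact (del_eq hk2 v.val J ⟨J.val + 2, by omega⟩ J.val (J.val + 2) rfl rfl
              (Or.inr ⟨by omega, rfl⟩)).symm.trans h4
          · intro t ht1 ht2
            have ht1' : t.val ≠ I.val + 2 := fun hh => ht1 (Fin.ext hh)
            have ht2' : t.val ≠ J.val + 2 := fun hh => ht2 (Fin.ext hh)
            have htn := t.isLt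
            rcases (by omega : t.val < k0 ∨ t.val = k0 ∨ t.val = k0 + 1 ∨ k0 + 2 ≤ t.val)
              with h | h | h | h
            · have := hrest ⟨t.val, by omega⟩
                (Fin.ne_of_val_ne (show t.val ≠ I.val by omega))
                (Fin.ne_of_val_ne (show t.val ≠ J.val by omega))
              rwa [del_eq hk2 v.val _ t t.val t.val rfl rfl (Or.inl ⟨h, rfl⟩),
                del_eq hk2 u.val _ t t.val t.val rfl rfl (Or.inl ⟨h, rfl⟩)] at this
            · rw [show t = (⟨k0, hk0n⟩ : Fin n) from Fin.ext h, v.2.1, u.2.1]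
            · rw [show t = (⟨k0 + 1, hk1n⟩ : Fin n) from Fin.ext h, v.2.2, u.2.2]
            · have := hrest ⟨t.val - 2, by omega⟩
                (Fin.ne_of_val_ne (show t.val - 2 ≠ I.val by omega))
                (Fin.ne_of_val_ne (show t.val - 2 ≠ J.val by omega))
              rwa [del_eq hk2 v.val _ t (t.val - 2) t.val rfl rfl
                  (Or.inr ⟨by omega, by omega⟩),
                del_eq hk2 u.val _ t (t.val - 2) t.val rfl rfl
                  (Or.inr ⟨by omega, by omega⟩)] at this
        · -- straddling swap: non-standard first form
          refine Or.inr (Or.inl ⟨⟨k0 - 1, by omega⟩, ⟨k0 + 2, by omega⟩, rfl, rfl,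
            ?_, ?_, ?_, ?_, ?_⟩)
          · exact (del_eq hk2 u.val I ⟨k0 - 1, by omega⟩ I.val (k0 - 1) rfl rfl
              (Or.inl ⟨by omega, by omega⟩)).symm.trans h1
          · exact (del_eq hk2 u.val J ⟨k0 + 2, by omega⟩ J.val (k0 + 2) rfl rfl
              (Or.inr ⟨by omega, by omega⟩)).symm.trans h2
          · exact (del_eq hk2 v.val I ⟨k0 - 1, by omega⟩ I.val (k0 - 1) rfl rfl
              (Or.inl ⟨by omega, by omega⟩)).symm.trans h3
          · exact (del_eq hk2 v.val J ⟨k0 + 2, by omega⟩ J.val (k0 + 2) rfl rfl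
              (Or.inr ⟨by omega, by omega⟩)).symm.trans h4
          · intro t ht1 ht2
            have ht1' : t.val ≠ k0 - 1 := fun hh => ht1 (Fin.ext hh)
            have ht2' : t.val ≠ k0 + 2 := fun hh => ht2 (Fin.ext hh)
            have htn := t.isLt
            rcases (by omega : t.val < k0 ∨ t.val = k0 ∨ t.val = k0 + 1 ∨ k0 + 2 ≤ t.val)
              with h | h | h | h
            · have := hrest ⟨t.val, by omega⟩
                (Fin.ne_of_val_ne (show t.val ≠ I.val by omega))
                (Fin.ne_of_val_ne (show t.val ≠ J.val by omega))
              rwa [del_eq hk2 v.val _ t t.val t.val rfl rfl (Or.inl ⟨h, rfl⟩),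
                del_eq hk2 u.val _ t t.val t.val rfl rfl (Or.inl ⟨h, rfl⟩)] at this
            · rw [show t = (⟨k0, hk0n⟩ : Fin n) from Fin.ext h, v.2.1, u.2.1]
            · rw [show t = (⟨k0 + 1, hk1n⟩ : Fin n) from Fin.ext h, v.2.2, u.2.2]
            · have := hrest ⟨t.val - 2, by omega⟩
                (Fin.ne_of_val_ne (show t.val - 2 ≠ I.val by omega))
                (Fin.ne_of_val_ne (show t.val - 2 ≠ J.val by omega))
              rwa [del_eq hk2 v.val _ t (t.val - 2) t.val rfl rfl
                  (Or.inr ⟨by omega, by omega⟩),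
                del_eq hk2 u.val _ t (t.val - 2) t.val rfl rfl
                  (Or.inr ⟨by omega, by omega⟩)] at this
      · -- small final
        have hIn := I.isLt
        have hI3 : I.val = n - 3 := by omega
        rcases (by omega : k0 + 3 ≤ n ∨ k0 + 2 = n) with hc | hc
        · refine Or.inl (Or.inr ⟨⟨n - 1, by omega⟩, rfl, ?_, ?_, ?_⟩)
          · exact (del_eq hk2 u.val I ⟨n - 1, by omega⟩ I.val (n - 1) rfl rfl
              (Or.inr ⟨by omega, by omega⟩)).symm.trans h1
          · exact (del_eq hk2 v.val I ⟨n - 1, by omega⟩ I.val (n - 1) rfl rfl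
              (Or.inr ⟨by omega, by omega⟩)).symm.trans h2
          · intro t ht1
            have ht1' : t.val ≠ n - 1 := fun hh => ht1 (Fin.ext hh)
            have htn := t.isLt
            rcases (by omega : t.val < k0 ∨ t.val = k0 ∨ t.val = k0 + 1 ∨ k0 + 2 ≤ t.val)
              with h | h | h | h
            · have := hrest ⟨t.val, by omega⟩
                (Fin.ne_of_val_ne (show t.val ≠ I.val by omega))
              rwa [del_eq hk2 v.val _ t t.val t.val rfl rfl (Or.inl ⟨h, rfl⟩),
                del_eq hk2 u.val _ t t.val t.val rfl rfl (Or.inl ⟨h, rfl⟩)] at this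
            · rw [show t = (⟨k0, hk0n⟩ : Fin n) from Fin.ext h, v.2.1, u.2.1]
            · rw [show t = (⟨k0 + 1, hk1n⟩ : Fin n) from Fin.ext h, v.2.2, u.2.2]
            · have := hrest ⟨t.val - 2, by omega⟩
                (Fin.ne_of_val_ne (show t.val - 2 ≠ I.val by omega))
              rwa [del_eq hk2 v.val _ t (t.val - 2) t.val rfl rfl
                  (Or.inr ⟨by omega, by omega⟩),
                del_eq hk2 u.val _ t (t.val - 2) t.val rfl rfl
                  (Or.inr ⟨by omega, by omega⟩)] at this
        · refine Or.inr (Or.inr ⟨hc, ⟨k0 - 1, by omega⟩, rfl, ?_, ?_, ?_⟩)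
          · exact (del_eq hk2 u.val I ⟨k0 - 1, by omega⟩ I.val (k0 - 1) rfl rfl
              (Or.inl ⟨by omega, by omega⟩)).symm.trans h1
          · exact (del_eq hk2 v.val I ⟨k0 - 1, by omega⟩ I.val (k0 - 1) rfl rfl
              (Or.inl ⟨by omega, by omega⟩)).symm.trans h2
          · intro t ht1
            have ht1' : t.val ≠ k0 - 1 := fun hh => ht1 (Fin.ext hh)
            have htn := t.isLt
            rcases (by omega : t.val < k0 ∨ t.val = k0 ∨ t.val = k0 + 1) with h | h | h
            · have := hrest ⟨t.val, by omega⟩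
                (Fin.ne_of_val_ne (show t.val ≠ I.val by omega))
              rwa [del_eq hk2 v.val _ t t.val t.val rfl rfl (Or.inl ⟨h, rfl⟩),
                del_eq hk2 u.val _ t t.val t.val rfl rfl (Or.inl ⟨h, rfl⟩)] at this
            · rw [show t = (⟨k0, hk0n⟩ : Fin n) from Fin.ext h, v.2.1, u.2.1]
            · rw [show t = (⟨k0 + 1, hk1n⟩ : Fin n) from Fin.ext h, v.2.2, u.2.2]

end Stmt11
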